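/- arXiv:2605.07853 — 2 statements merged into one kernel-verified Lean document; each statement's English description precedes it below -/
import Mathlib

section
/- Let Γ be a finite simplicial graph, {G_i} and {G'_i} families of groups, and f_i : G_i → G'_i set maps. Define Φ on words in the syllables recursively by Φ(empty)=empty and Φ(ws) = Φ(w) if f(π(w)) = f(π(ws)), and Φ(ws) = Φ(w)·(f(π(w))^{-1} f(π(ws))) otherwise, where π is the projection of the graph product onto the direct product and f is the coordinatewise map. Then Φ descends to a well-defined set map Φ_Γ : G_Γ → G'_Γ on the graph products, i.e., any two words representing the same element of G_Γ have images representing the same element of G'_Γ. -/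
open Monoid
open scoped commutatorElement

namespace GPaper

variable {ι : Type*}

/-- The relator subgroup of the graph product: normal closure of commutators of
elements of vertex groups at adjacent vertices. -/
def Rels (Γ : SimpleGraph ι) (G : ι → Type*) [∀ i, Group (G i)] : Subgroup (Monoid.CoprodI G) :=
  Subgroup.normalClosure
    { x | ∃ (i j : ι) (g : G i) (h : G j), Γ.Adj i j ∧
          x = ⁅Monoid.CoprodI.of g, Monoid.CoprodI.of h⁆ }

instance (Γ : SimpleGraph ι) (G : ι → Type*) [∀ i, Group (G i)] : (Rels Γ G).Normal :=
  Subgroup.normalClosure_normal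

/-- The graph product of the groups `G i` over the simplicial graph `Γ`. -/
abbrev GP (Γ : SimpleGraph ι) (G : ι → Type*) [∀ i, Group (G i)] :=
  Monoid.CoprodI G ⧸ Rels Γ G

/-- The canonical inclusion of a vertex group into the graph product. -/
def of (Γ : SimpleGraph ι) (G : ι → Type*) [∀ i, Group (G i)] (i : ι) : G i →* GP Γ G :=
  (QuotientGroup.mk' (Rels Γ G)).comp Monoid.CoprodI.of

/-- The canonical homomorphism from the graph product to the direct product. -/
def proj [DecidableEq ι] (Γ : SimpleGraph ι) (G : ι → Type*) [∀ i, Group (G i)] :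
    GP Γ G →* (∀ i, G i) :=
  QuotientGroup.lift (Rels Γ G) (Monoid.CoprodI.lift (fun i => MonoidHom.mulSingle G i)) (by
    intro x hx
    refine Subgroup.normalClosure_le_normal ?_ hx
    rintro y ⟨i, j, g, h, hadj, rfl⟩
    have hij : i ≠ j := hadj.ne
    simp only [SetLike.mem_coe, MonoidHom.mem_ker, map_commutatorElement,
      Monoid.CoprodI.lift_of]
    rw [commutatorElement_eq_one_iff_commute]
    exact Pi.mulSingle_commute hij g h)

/-- The canonical epimorphism `G_Γ → G_Γ'` when `Γ'` is obtained from `Γ` by adding edges. -/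
def mapGraph (Γ Γ' : SimpleGraph ι) (hΓ : Γ ≤ Γ') (G : ι → Type*) [∀ i, Group (G i)] :
    GP Γ G →* GP Γ' G :=
  QuotientGroup.lift (Rels Γ G) (QuotientGroup.mk' (Rels Γ' G)) (by
    intro x hx
    rw [QuotientGroup.ker_mk']
    refine Subgroup.normalClosure_le_normal ?_ hx
    rintro y ⟨i, j, g, h, hadj, rfl⟩
    exact Subgroup.subset_normalClosure ⟨i, j, g, h, hΓ hadj, rfl⟩)

/-- The element of the graph product represented by a word (list of syllables). -/
def wordProd (Γ : SimpleGraph ι) (G : ι → Type*) [∀ i, Group (G i)]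
    (w : List (Σ i, G i)) : GP Γ G :=
  (w.map fun s => of Γ G s.1 s.2).prod

/-- The image of a word in the direct product of the vertex groups. -/
def piProd [DecidableEq ι] (G : ι → Type*) [∀ i, Group (G i)]
    (w : List (Σ i, G i)) : ∀ i, G i :=
  (w.map fun s => Pi.mulSingle s.1 s.2).prod

/-- The ordered product of those syllables of a word that belong to `G i`. -/
def sylProd [DecidableEq ι] (G : ι → Type*) [∀ i, Group (G i)]
    (w : List (Σ i, G i)) (i : ι) : G i :=
  (w.filterMap fun s => if h : s.1 = i then some (cast (congrArg G h) s.2) else none).prod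

/-- The normal (syllable) length of an element of a graph product:
the minimal number of syllables in a word representing it. -/
noncomputable def nl (Γ : SimpleGraph ι) (G : ι → Type*) [∀ i, Group (G i)]
    (g : GP Γ G) : ℕ :=
  sInf { n | ∃ w : List (Σ i, G i), wordProd Γ G w = g ∧ w.length = n }

section Phi

open scoped Classical

variable [DecidableEq ι] {G G' : ι → Type*} [∀ i, Group (G i)] [∀ i, Group (G' i)]

/-- One step of the recursive construction of `Φ`: the new syllable
`f(π(w))⁻¹ · f(π(w)s)` (dropped if trivial), where `g = π(w)`. -/
noncomputable def phiStep (f : ∀ i, G i → G' i) (g : ∀ i, G i) (s : Σ i, G i) : List (Σ i, G' i) :=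
  if (f s.1 (g s.1))⁻¹ * f s.1 (g s.1 * s.2) = 1 then []
  else [⟨s.1, (f s.1 (g s.1))⁻¹ * f s.1 (g s.1 * s.2)⟩]

/-- Auxiliary recursion: process the word left to right, carrying the
image `g` of the prefix in the direct product. -/
noncomputable def phiAux (f : ∀ i, G i → G' i) : (∀ i, G i) → List (Σ i, G i) → List (Σ i, G' i)
  | _, [] => []
  | g, s :: w => phiStep f g s ++ phiAux f (g * Pi.mulSingle s.1 s.2) w

/-- The word map `Φ : S* → S'*` induced by the set maps `f i : G i → G' i`. -/
noncomputable def phiWord (f : ∀ i, G i → G' i) (w : List (Σ i, G i)) : List (Σ i, G' i) :=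
  phiAux f 1 w

end Phi


section Stmt2Aux

open scoped Classical

variable [DecidableEq ι] (Γ : SimpleGraph ι) (G G' : ι → Type*)
  [∀ i, Group (G i)] [∀ i, Group (G' i)] (f : ∀ i, G i → G' i)

lemma of_commute {i j : ι} (hadj : Γ.Adj i j) (a : G i) (b : G j) :
    Commute (of Γ G i a) (of Γ G j b) := by
  rw [← commutatorElement_eq_one_iff_commute]
  have : ⁅of Γ G i a, of Γ G j b⁆
      = (QuotientGroup.mk' (Rels Γ G)) ⁅Monoid.CoprodI.of a, Monoid.CoprodI.of b⁆ := by
    simp [of, map_commutatorElement]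
  rw [this]
  rw [show ((1 : GP Γ G)) = (QuotientGroup.mk' (Rels Γ G)) 1 from (map_one _).symm]
  rw [QuotientGroup.mk'_eq_mk']
  exact ⟨⁅Monoid.CoprodI.of a, Monoid.CoprodI.of b⁆⁻¹, by
    refine inv_mem (Subgroup.subset_normalClosure ⟨i, j, a, b, hadj, rfl⟩), by group⟩

/-- The per-vertex action used to descend `Φ` to the graph product. -/
noncomputable def actHom (i : ι) :
    G i →* (Function.End ((∀ i, G i) × GP Γ G'))ᵐᵒᵖ where
  toFun a := MulOpposite.op (fun p =>
    (p.1 * Pi.mulSingle i a, p.2 * of Γ G' i ((f i (p.1 i))⁻¹ * f i (p.1 i * a))))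
  map_one' := by
    apply MulOpposite.unop_injective
    funext p
    show (p.1 * Pi.mulSingle i 1, p.2 * of Γ G' i ((f i (p.1 i))⁻¹ * f i (p.1 i * 1))) = p
    simp
  map_mul' a b := by
    apply MulOpposite.unop_injective
    funext p
    show (p.1 * Pi.mulSingle i (a * b),
        p.2 * of Γ G' i ((f i (p.1 i))⁻¹ * f i (p.1 i * (a * b))))
      = (p.1 * Pi.mulSingle i a * Pi.mulSingle i b,
          p.2 * of Γ G' i ((f i (p.1 i))⁻¹ * f i (p.1 i * a))
            * of Γ G' i ((f i ((p.1 * Pi.mulSingle i a) i))⁻¹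
                * f i ((p.1 * Pi.mulSingle i a) i * b)))
    have h1 : (p.1 * Pi.mulSingle i a) i = p.1 i * a := by simp
    rw [h1]
    refine Prod.ext ?_ ?_
    · show p.1 * Pi.mulSingle i (a * b) = p.1 * Pi.mulSingle i a * Pi.mulSingle i b
      rw [mul_assoc]
      congr 1
      exact map_mul (MonoidHom.mulSingle G i) a b
    · rw [show p.1 i * (a * b) = p.1 i * a * b from (mul_assoc _ _ _).symm]
      show p.2 * of Γ G' i ((f i (p.1 i))⁻¹ * f i (p.1 i * a * b))
          = p.2 * of Γ G' i ((f i (p.1 i))⁻¹ * f i (p.1 i * a))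
              * of Γ G' i ((f i (p.1 i * a))⁻¹ * f i (p.1 i * a * b))
      rw [mul_assoc p.2, ← map_mul]
      congr 2
      group

/-- The lifted action of the graph product. -/
noncomputable def bigAct : GP Γ G →* (Function.End ((∀ i, G i) × GP Γ G'))ᵐᵒᵖ :=
  QuotientGroup.lift (Rels Γ G) (Monoid.CoprodI.lift (actHom Γ G G' f)) (by
    intro x hx
    refine Subgroup.normalClosure_le_normal ?_ hx
    rintro y ⟨i, j, a, b, hadj, rfl⟩
    simp only [SetLike.mem_coe, MonoidHom.mem_ker]
    have hcomm : ∀ (a : G i) (b : G j),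
        actHom Γ G G' f i a * actHom Γ G G' f j b
          = actHom Γ G G' f j b * actHom Γ G G' f i a := by
      intro a b
      apply MulOpposite.unop_injective
      funext p
      have hij : i ≠ j := hadj.ne
      show ((p.1 * Pi.mulSingle i a) * Pi.mulSingle j b,
          (p.2 * of Γ G' i ((f i (p.1 i))⁻¹ * f i (p.1 i * a)))
            * of Γ G' j ((f j ((p.1 * Pi.mulSingle i a) j))⁻¹
                * f j ((p.1 * Pi.mulSingle i a) j * b)))
        = ((p.1 * Pi.mulSingle j b) * Pi.mulSingle i a,
          (p.2 * of Γ G' j ((f j (p.1 j))⁻¹ * f j (p.1 j * b)))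
            * of Γ G' i ((f i ((p.1 * Pi.mulSingle j b) i))⁻¹
                * f i ((p.1 * Pi.mulSingle j b) i * a)))
      have e1 : (p.1 * Pi.mulSingle j b) i = p.1 i := by
        simp [Pi.mulSingle_eq_of_ne hij]
      have e2 : (p.1 * Pi.mulSingle i a) j = p.1 j := by
        simp [Pi.mulSingle_eq_of_ne hij.symm]
      rw [e1, e2]
      refine Prod.ext ?_ ?_
      · simp only [mul_assoc]
        rw [(Pi.mulSingle_commute hij a b).eq]
      · simp only [mul_assoc]
        rw [(of_commute Γ G' hadj _ _).symm.eq]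
    have expand : (Monoid.CoprodI.lift (actHom Γ G G' f))
          ⁅Monoid.CoprodI.of a, Monoid.CoprodI.of b⁆
        = actHom Γ G G' f i a * actHom Γ G G' f j b
            * actHom Γ G G' f i a⁻¹ * actHom Γ G G' f j b⁻¹ := by
      simp only [commutatorElement_def, map_mul, ← map_inv, Monoid.CoprodI.lift_of]
    have h1 : actHom Γ G G' f i a * actHom Γ G G' f i a⁻¹ = 1 := by
      rw [← map_mul]; simp
    have h2 : actHom Γ G G' f j b * actHom Γ G G' f j b⁻¹ = 1 := by
      rw [← map_mul]; simp
    rw [expand, mul_assoc (actHom Γ G G' f i a), (hcomm a⁻¹ b).symm,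
      ← mul_assoc, h1, one_mul, h2])

lemma wordProd_cons (w : List (Σ i, G i)) (s : Σ i, G i) :
    wordProd Γ G (s :: w) = of Γ G s.1 s.2 * wordProd Γ G w := by
  simp [wordProd]

lemma wordProd_phiStep (g : ∀ i, G i) (s : Σ i, G i) :
    wordProd Γ G' (phiStep f g s)
      = of Γ G' s.1 ((f s.1 (g s.1))⁻¹ * f s.1 (g s.1 * s.2)) := by
  unfold phiStep
  split_ifs with h
  · simp [wordProd, h]
  · simp [wordProd]

lemma bigAct_of (i : ι) (a : G i) : bigAct Γ G G' f (of Γ G i a) = actHom Γ G G' f i a := by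
  simp [bigAct, of, Monoid.CoprodI.lift_of]

lemma bigAct_wordProd (w : List (Σ i, G i)) (p : (∀ i, G i) × GP Γ G') :
    (bigAct Γ G G' f (wordProd Γ G w)).unop p
      = (p.1 * piProd G w, p.2 * wordProd Γ G' (phiAux f p.1 w)) := by
  induction w generalizing p with
  | nil =>
      simp only [wordProd, piProd, phiAux, List.map_nil, List.prod_nil, mul_one, map_one]
      rfl
  | cons s w ih =>
      rw [wordProd_cons, map_mul, bigAct_of]
      have step : (MulOpposite.unop (actHom Γ G G' f s.1 s.2 * bigAct Γ G G' f (wordProd Γ G w))) p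
          = (bigAct Γ G G' f (wordProd Γ G w)).unop
              ((actHom Γ G G' f s.1 s.2).unop p) := rfl
      rw [step, ih]
      show ((p.1 * Pi.mulSingle s.1 s.2) * piProd G w,
          (p.2 * of Γ G' s.1 ((f s.1 (p.1 s.1))⁻¹ * f s.1 (p.1 s.1 * s.2)))
            * wordProd Γ G' (phiAux f (p.1 * Pi.mulSingle s.1 s.2) w)) = _
      refine Prod.ext ?_ ?_
      · simp [piProd, mul_assoc]
      · show _ = p.2 * wordProd Γ G' (phiAux f p.1 (s :: w))
        have : phiAux f p.1 (s :: w)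
            = phiStep f p.1 s ++ phiAux f (p.1 * Pi.mulSingle s.1 s.2) w := rfl
        rw [this]
        have happ : wordProd Γ G' (phiStep f p.1 s ++ phiAux f (p.1 * Pi.mulSingle s.1 s.2) w)
            = wordProd Γ G' (phiStep f p.1 s)
              * wordProd Γ G' (phiAux f (p.1 * Pi.mulSingle s.1 s.2) w) := by
          simp [wordProd]
        rw [happ, wordProd_phiStep]
        exact mul_assoc _ _ _

end Stmt2Aux

/-- The recursively defined word map `Φ` descends to a well-defined
set map `G_Γ → G'_Γ`: words representing the same element of the graph product have
images representing the same element. -/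
theorem stmt2 {ι : Type*} [DecidableEq ι] [Fintype ι] (Γ : SimpleGraph ι)
    (G G' : ι → Type*) [∀ i, Group (G i)] [∀ i, Group (G' i)]
    (f : ∀ i, G i → G' i) (w₁ w₂ : List (Σ i, G i))
    (h : wordProd Γ G w₁ = wordProd Γ G w₂) :
    wordProd Γ G' (phiWord f w₁) = wordProd Γ G' (phiWord f w₂) := by
  have h2 := congrArg (fun x => ((bigAct Γ G G' f x).unop (1, 1)).2) h
  simpa [bigAct_wordProd, phiWord] using h2

end GPaper
end

section
/- Let Γ be a finite simplicial graph, Γ̄ obtained from Γ by adding edges, and let f_i : G_i → G'_i be set maps. Then the induced homomorphism Φ_Γ : K_Γ → K'_Γ maps K_{Γ,Γ̄} = ker(G_Γ → G_{Γ̄}) into K'_{Γ,Γ̄} = ker(G'_Γ → G'_{Γ̄}). -/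
open Monoid
open scoped commutatorElement

namespace GPaper

variable {ι : Type*}

section Aux

variable {ι : Type*} [DecidableEq ι] {G G' : ι → Type*} [∀ i, Group (G i)] [∀ i, Group (G' i)]

/-- `of` images at adjacent vertices commute. -/
lemma of_commute_s6 (Δ : SimpleGraph ι) {i j : ι} (h : Δ.Adj i j) (g : G i) (k : G j) :
    Commute (of Δ G i g) (of Δ G j k) := by
  rw [← commutatorElement_eq_one_iff_commute]
  show (QuotientGroup.mk' (Rels Δ G)) ⁅Monoid.CoprodI.of g, Monoid.CoprodI.of k⁆ = 1
  rw [← MonoidHom.mem_ker, QuotientGroup.ker_mk']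
  exact Subgroup.subset_normalClosure ⟨i, j, g, k, h, rfl⟩

/-- `mapGraph` sends the word product in `Γ` to the word product in `Γ'`. -/
lemma mapGraph_wordProd (Γ Γ' : SimpleGraph ι) (hΓ : Γ ≤ Γ') (w : List (Σ i, G i)) :
    mapGraph Γ Γ' hΓ G (wordProd Γ G w) = wordProd Γ' G w := by
  unfold wordProd
  rw [map_list_prod, List.map_map]
  rfl

/-- Translation action of the direct product on functions into `GP Δ G'`. -/
noncomputable def transφ (Δ : SimpleGraph ι) :
    (∀ i, G i) →* MulAut ((∀ i, G i) → GP Δ G') where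
  toFun a :=
    { toFun := fun F x => F (x * a)
      invFun := fun F x => F (x * a⁻¹)
      left_inv := fun F => by funext x; simp
      right_inv := fun F => by funext x; simp
      map_mul' := fun F K => rfl }
  map_one' := by ext F x; simp [MulAut.one_apply]
  map_mul' a b := by ext F x; simp [MulAut.mul_apply, mul_assoc]

/-- The vertex homomorphisms used to build `Θ`. -/
noncomputable def mu (Δ : SimpleGraph ι) (f : ∀ i, G i → G' i) (i : ι) :
    G i →* (((∀ i, G i) → GP Δ G') ⋊[transφ Δ] (∀ i, G i)) where
  toFun g :=
    ⟨fun x => of Δ G' i ((f i (x i))⁻¹ * f i (x i * g)), Pi.mulSingle i g⟩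
  map_one' := by
    refine SemidirectProduct.ext ?_ ?_
    · funext x; simp
    · simp
  map_mul' g h := by
    refine SemidirectProduct.ext ?_ ?_
    · funext x
      show of Δ G' i ((f i (x i))⁻¹ * f i (x i * (g * h))) =
        of Δ G' i ((f i (x i))⁻¹ * f i (x i * g)) *
          of Δ G' i ((f i ((x * Pi.mulSingle i g) i))⁻¹ * f i ((x * Pi.mulSingle i g) i * h))
      rw [← map_mul]
      congr 1
      simp [mul_assoc]
    · simp [SemidirectProduct.mul_right, Pi.mulSingle_mul]

/-- The homomorphism `Θ : CoprodI G → (fun-space) ⋊ ∏ G i`. -/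
noncomputable def theta (Δ : SimpleGraph ι) (f : ∀ i, G i → G' i) :
    Monoid.CoprodI G →* (((∀ i, G i) → GP Δ G') ⋊[transφ Δ] (∀ i, G i)) :=
  Monoid.CoprodI.lift (mu Δ f)

lemma theta_rels (Δ : SimpleGraph ι) (f : ∀ i, G i → G' i) :
    Rels Δ G ≤ (theta Δ f).ker := by
  refine Subgroup.normalClosure_le_normal ?_
  rintro y ⟨i, j, g, h, hadj, rfl⟩
  have hij : i ≠ j := hadj.ne
  simp only [SetLike.mem_coe, MonoidHom.mem_ker, map_commutatorElement, theta,
    Monoid.CoprodI.lift_of]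
  rw [commutatorElement_eq_one_iff_commute]
  unfold Commute SemiconjBy
  refine SemidirectProduct.ext ?_ ?_
  · funext x
    simp only [SemidirectProduct.mul_left]
    show of Δ G' i ((f i (x i))⁻¹ * f i (x i * g)) *
        of Δ G' j ((f j ((x * Pi.mulSingle i g) j))⁻¹ * f j ((x * Pi.mulSingle i g) j * h)) =
      of Δ G' j ((f j (x j))⁻¹ * f j (x j * h)) *
        of Δ G' i ((f i ((x * Pi.mulSingle j h) i))⁻¹ * f i ((x * Pi.mulSingle j h) i * g))
    rw [show (x * Pi.mulSingle i g) j = x j by simp [Pi.mulSingle_eq_of_ne' hij],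
      show (x * Pi.mulSingle j h) i = x i by simp [Pi.mulSingle_eq_of_ne' hij.symm]]
    exact of_commute_s6 Δ hadj _ _
  · simp only [SemidirectProduct.mul_right]
    exact (Pi.mulSingle_commute hij g h).eq

/-- The key computation: the left component of `Θ` on a word recovers `phiAux`. -/
lemma theta_left (Δ : SimpleGraph ι) (f : ∀ i, G i → G' i) (w : List (Σ i, G i))
    (g : ∀ i, G i) :
    (theta Δ f ((w.map fun s => Monoid.CoprodI.of s.2).prod)).left g =
      wordProd Δ G' (phiAux f g w) := by
  classical
  induction w generalizing g with
  | nil => simp [phiAux, wordProd]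
  | cons s w ih =>
    rw [List.map_cons, List.prod_cons, map_mul, SemidirectProduct.mul_left]
    show of Δ G' s.1 ((f s.1 (g s.1))⁻¹ * f s.1 (g s.1 * s.2)) *
        (theta Δ f ((w.map fun s => Monoid.CoprodI.of s.2).prod)).left
          (g * Pi.mulSingle s.1 s.2) = _
    rw [ih, phiAux]
    unfold wordProd
    rw [List.map_append, List.prod_append]
    congr 1
    unfold phiStep
    split_ifs with h
    · simp [h]
    · simp

end Aux

/-- The induced map `Φ_Γ` sends `K_{Γ,Γ̄} = ker(G_Γ → G_{Γ̄})` into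
`K'_{Γ,Γ̄} = ker(G'_Γ → G'_{Γ̄})` (stated on representing words in the kernel `K_Γ`). -/
theorem stmt6 {ι : Type*} [DecidableEq ι] [Fintype ι] (Γ Γ' : SimpleGraph ι)
    (hΓ : Γ ≤ Γ') (G G' : ι → Type*) [∀ i, Group (G i)] [∀ i, Group (G' i)]
    (f : ∀ i, G i → G' i) (w : List (Σ i, G i))
    (hw : wordProd Γ G w ∈ (proj Γ G).ker)
    (hker : mapGraph Γ Γ' hΓ G (wordProd Γ G w) = 1) :
    mapGraph Γ Γ' hΓ G' (wordProd Γ G' (phiWord f w)) = 1 := by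
  classical
  rw [mapGraph_wordProd Γ Γ' hΓ (phiWord f w)]
  rw [mapGraph_wordProd Γ Γ' hΓ w] at hker
  -- express the word product in `Γ'` through the free product
  have hmk : ∀ (H : ι → Type _) [∀ i, Group (H i)] (v : List (Σ i, H i)),
      wordProd Γ' H v =
        QuotientGroup.mk' (Rels Γ' H) ((v.map fun s => Monoid.CoprodI.of s.2).prod) := by
    intro H _ v
    unfold wordProd
    rw [map_list_prod, List.map_map]
    rfl
  rw [hmk G w] at hker
  have hmem : ((w.map fun s => Monoid.CoprodI.of s.2).prod) ∈ Rels Γ' G := by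
    rwa [← QuotientGroup.ker_mk' (Rels Γ' G), MonoidHom.mem_ker]
  have hθ : theta (G' := G') Γ' f ((w.map fun s => Monoid.CoprodI.of s.2).prod) = 1 :=
    theta_rels Γ' f hmem
  have := theta_left Γ' f w 1
  rw [hθ] at this
  rw [phiWord, ← this]
  rfl

end GPaper
end
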